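/- If M(z,ζ) is the 2×2 matrix with entries M₁₁ = (z + z⁻¹) + (1/4)(ζ + ζ̄ + ζ z⁻¹ + ζ̄ z) − 3, M₁₂ = M₂₁ = (√3/4)(ζ + ζ̄ − ζ z⁻¹ − ζ̄ z), M₂₂ = (3/4)(ζ + ζ̄ + ζ z⁻¹ + ζ̄ z) − 3, then for |ζ| = 1 the function z ↦ z²·det M(z,ζ) is a polynomial of degree 4 in z, and if z₀ is a root of det M(·,ζ) = 0 then so is ζ/z₀. -/

import Mathlib

set_option maxHeartbeats 1000000

open Complex

/-- For the 2×2 Cauchy–Born symbol `M(z,ζ)` of Example 2 with `|ζ| = 1`,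
the function `z ↦ z² det M(z,ζ)` is (given by) a polynomial of degree 4 in `z`,
and if `z₀ ≠ 0` is a root of `det M(·,ζ)` then so is `ζ/z₀`. -/
theorem stmt19 (ζ : ℂ) (hζ : ‖ζ‖ = 1) :
    let M11 : ℂ → ℂ := fun z =>
      (z + z⁻¹) + (1 / 4) * (ζ + starRingEnd ℂ ζ + ζ * z⁻¹ + starRingEnd ℂ ζ * z) - 3
    let M12 : ℂ → ℂ := fun z =>
      ((Real.sqrt 3 : ℝ) : ℂ) / 4 * (ζ + starRingEnd ℂ ζ - ζ * z⁻¹ - starRingEnd ℂ ζ * z)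
    let M22 : ℂ → ℂ := fun z =>
      (3 / 4) * (ζ + starRingEnd ℂ ζ + ζ * z⁻¹ + starRingEnd ℂ ζ * z) - 3
    let detM : ℂ → ℂ := fun z => M11 z * M22 z - M12 z * M12 z
    (∃ p : Polynomial ℂ, p.degree = 4 ∧ ∀ z : ℂ, z ≠ 0 → p.eval z = z ^ 2 * detM z) ∧
    (∀ z₀ : ℂ, z₀ ≠ 0 → detM z₀ = 0 → detM (ζ / z₀) = 0) := by
  intro M11 M12 M22 detM
  have hζ0 : ζ ≠ 0 := by
    intro h; rw [h] at hζ; simp at hζ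
  have hc0 : starRingEnd ℂ ζ ≠ 0 := by
    simpa using hζ0
  have hm : ζ * starRingEnd ℂ ζ = 1 := by
    rw [Complex.mul_conj, ← Complex.sq_norm, hζ]; norm_num
  have hs : (((Real.sqrt 3 : ℝ) : ℂ)) * ((Real.sqrt 3 : ℝ) : ℂ) = 3 := by
    rw [← Complex.ofReal_mul, Real.mul_self_sqrt (by norm_num)]
    norm_num
  constructor
  · refine ⟨Polynomial.C ((3 / 4) * ζ) +
      Polynomial.C ((3 / 4) * starRingEnd ℂ ζ - 9 / 4 - (9 / 4) * ζ + (3 / 4) * ζ ^ 2) *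
        Polynomial.X +
      Polynomial.C (-(9 / 4) * starRingEnd ℂ ζ + 9 - (9 / 4) * ζ) * Polynomial.X ^ 2 +
      Polynomial.C ((3 / 4) * (starRingEnd ℂ ζ) ^ 2 - (9 / 4) * starRingEnd ℂ ζ - 9 / 4 +
        (3 / 4) * ζ) * Polynomial.X ^ 3 +
      Polynomial.C ((3 / 4) * starRingEnd ℂ ζ) * Polynomial.X ^ 4, ?_, ?_⟩
    · compute_degree!
    · intro z hz
      have hzw : z * z⁻¹ = 1 := mul_inv_cancel₀ hz
      simp only [detM, M11, M12, M22, Polynomial.eval_add, Polynomial.eval_mul,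
        Polynomial.eval_pow, Polynomial.eval_C, Polynomial.eval_X]
      linear_combination ((1/16)*z^2*(starRingEnd ℂ ζ)^2 + (1/8)*z^2*ζ*(starRingEnd ℂ ζ) +
        (-1/8)*z^2*ζ*(starRingEnd ℂ ζ)*(z⁻¹) + (1/16)*z^2*ζ^2 + (-1/8)*z^2*ζ^2*(z⁻¹) +
        (1/16)*z^2*ζ^2*(z⁻¹)^2 + (-1/8)*z^3*(starRingEnd ℂ ζ)^2 +
        (-1/8)*z^3*ζ*(starRingEnd ℂ ζ) + (1/8)*z^3*ζ*(starRingEnd ℂ ζ)*(z⁻¹) +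
        (1/16)*z^4*(starRingEnd ℂ ζ)^2) * hs +
        ((-3/4)*z^2*(z⁻¹) + (-3/4)*z^3) * hm +
        ((-3/4)*ζ + (9/4)*z + (-3/4)*z*(starRingEnd ℂ ζ) + (9/4)*z*ζ + (-3/4)*z*ζ*(z⁻¹) +
        (-3/4)*z*ζ^2 + (-3/4)*z^2*(starRingEnd ℂ ζ) + (-3/4)*z^2*ζ) * hzw
  · intro z₀ hz₀ h
    have hu : (ζ / z₀)⁻¹ = z₀ * starRingEnd ℂ ζ := by
      rw [inv_div, div_eq_mul_inv, Complex.inv_eq_conj hζ]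
    have key : detM (ζ / z₀) = detM z₀ := by
      simp only [detM, M11, M12, M22]
      rw [hu]
      linear_combination ((-1/8)*ζ*(starRingEnd ℂ ζ)*(z₀⁻¹) + (1/8)*ζ*(starRingEnd ℂ ζ)^2*(z₀⁻¹) +
        (-1/8)*ζ^2*(z₀⁻¹) + (1/16)*ζ^2*(z₀⁻¹)^2 + (1/8)*ζ^2*(starRingEnd ℂ ζ)*(z₀⁻¹) +
        (-1/16)*ζ^2*(starRingEnd ℂ ζ)^2*(z₀⁻¹)^2 + (-1/8)*z₀*(starRingEnd ℂ ζ)^2 +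
        (-1/8)*z₀*ζ*(starRingEnd ℂ ζ) + (1/8)*z₀*ζ*(starRingEnd ℂ ζ)*(z₀⁻¹) +
        (1/8)*z₀*ζ*(starRingEnd ℂ ζ)^2 + (1/8)*z₀*ζ^2*(starRingEnd ℂ ζ) +
        (-1/8)*z₀*ζ^2*(starRingEnd ℂ ζ)^2*(z₀⁻¹) + (1/16)*z₀^2*(starRingEnd ℂ ζ)^2 +
        (-1/16)*z₀^2*ζ^2*(starRingEnd ℂ ζ)^2) * hs +
        ((-3)*(z₀⁻¹) + (3/4)*(starRingEnd ℂ ζ)*(z₀⁻¹) + (3/4)*ζ*(z₀⁻¹) + (3/4)*ζ*(z₀⁻¹)^2 +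
        (-3)*z₀ + (3/4)*z₀*(starRingEnd ℂ ζ) + (3/4)*z₀*(starRingEnd ℂ ζ)*(z₀⁻¹) +
        (3/4)*z₀*ζ + (3/4)*z₀*ζ*(z₀⁻¹) + (3/4)*z₀^2*(starRingEnd ℂ ζ)) * hm
    rw [key, h]
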